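/- Let n ≥ 1, 1 ≤ p < ∞, 0 ≤ λ < n, and let w be a weight on ℝⁿ. If there is a constant C such that ‖Mf‖_{WL^{p,λ}(w)} ≤ C ‖f‖_{L^{p,λ}(w)} for every f with ‖f‖_{L^{p,λ}(w)} < ∞ (i.e., M is bounded from L^{p,λ}(w) to WL^{p,λ}(w)), then w ∈ A_{p + λ/n}. -/

import Mathlib

open MeasureTheory Metric ENNReal NNReal Topology Filter

noncomputable section

/-- Euclidean space ℝⁿ. -/
abbrev Euc (n : ℕ) := EuclideanSpace ℝ (Fin n)

/-- A weight on ℝⁿ: a nonnegative locally integrable function. -/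
def IsWeight (n : ℕ) (w : Euc n → ℝ) : Prop :=
  (∀ x, 0 ≤ w x) ∧ LocallyIntegrable w volume

/-- `w(A) = ∫_A w`. -/
def wInt (n : ℕ) (w : Euc n → ℝ) (s : Set (Euc n)) : ℝ≥0∞ :=
  ∫⁻ y in s, ENNReal.ofReal (w y)

/-- The `A_q` constant for `1 < q`:
`sup_B (w(B)/|B|) ((w^{1-q'}(B))/|B|)^{q-1}` with `q' = q/(q-1)`. -/
def ApConst (n : ℕ) (q : ℝ) (w : Euc n → ℝ) : ℝ≥0∞ :=
  ⨆ (x : Euc n) (r : ℝ) (_ : 0 < r),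
    (wInt n w (ball x r) / volume (ball x r)) *
      (wInt n (fun y => w y ^ (1 - q / (q - 1))) (ball x r) / volume (ball x r)) ^ (q - 1)

/-- The `A_1` constant: the least `c` such that for every ball `B`,
`w(B)/|B| ≤ c w(x)` for a.e. `x ∈ B`. -/
def A1Const (n : ℕ) (w : Euc n → ℝ) : ℝ≥0∞ :=
  sInf {c : ℝ≥0∞ | ∀ (x : Euc n) (r : ℝ), 0 < r →
    ∀ᵐ y ∂(volume.restrict (ball x r)),
      wInt n w (ball x r) / volume (ball x r) ≤ c * ENNReal.ofReal (w y)}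

/-- The Muckenhoupt constant `[w]_{A_q}` (for `q = 1` the `A_1` constant). -/
def muckConst (n : ℕ) (q : ℝ) (w : Euc n → ℝ) : ℝ≥0∞ :=
  if q = 1 then A1Const n w else ApConst n q w

/-- Membership in the Muckenhoupt class `A_q`. -/
def MemAp (n : ℕ) (q : ℝ) (w : Euc n → ℝ) : Prop := muckConst n q w < ⊤

/-- The reverse Hölder `RH_σ` constant: the least `c` such that
`(|B|⁻¹ ∫_B w^σ)^{1/σ} ≤ c |B|⁻¹ ∫_B w` for all balls `B`. -/
def RHConst (n : ℕ) (σ : ℝ) (w : Euc n → ℝ) : ℝ≥0∞ :=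
  sInf {c : ℝ≥0∞ | ∀ (x : Euc n) (r : ℝ), 0 < r →
    ((volume (ball x r))⁻¹ * ∫⁻ y in ball x r, ENNReal.ofReal (w y ^ σ)) ^ (1 / σ) ≤
      c * ((volume (ball x r))⁻¹ * wInt n w (ball x r))}

/-- Membership in the reverse Hölder class `RH_σ`. -/
def MemRH (n : ℕ) (σ : ℝ) (w : Euc n → ℝ) : Prop := RHConst n σ w < ⊤

/-- `‖f‖_{L^p(w)} = (∫ |f|^p w)^{1/p}`. -/
def lpNorm (n : ℕ) (p : ℝ) (w f : Euc n → ℝ) : ℝ≥0∞ :=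
  (∫⁻ x, ENNReal.ofReal (|f x| ^ p * w x)) ^ (1 / p)

/-- `‖g‖_{L^{p,∞}(w)} = sup_{t>0} t (w{|g|>t})^{1/p}`. -/
def weakLpNorm (n : ℕ) (p : ℝ) (w g : Euc n → ℝ) : ℝ≥0∞ :=
  ⨆ (t : ℝ) (_ : 0 < t), ENNReal.ofReal t * (wInt n w {x | t < |g x|}) ^ (1 / p)

/-- The Morrey norm `‖f‖_{L^{p,λ}(u)} = sup_{x,r>0} (r^{-λ} ∫_{B(x,r)} |f|^p u)^{1/p}`. -/
def morreyNorm (n : ℕ) (p lam : ℝ) (u f : Euc n → ℝ) : ℝ≥0∞ :=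
  ⨆ (x : Euc n) (r : ℝ) (_ : 0 < r),
    (ENNReal.ofReal (r ^ (-lam)) *
      ∫⁻ y in ball x r, ENNReal.ofReal (|f y| ^ p * u y)) ^ (1 / p)

/-- The weak Morrey norm
`‖f‖_{WL^{p,λ}(u)} = sup_{x,r>0,t>0} (t^p u({y ∈ B(x,r) : |f y| > t}) / r^λ)^{1/p}`. -/
def weakMorreyNorm (n : ℕ) (p lam : ℝ) (u f : Euc n → ℝ) : ℝ≥0∞ :=
  ⨆ (x : Euc n) (r : ℝ) (_ : 0 < r) (t : ℝ) (_ : 0 < t),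
    (ENNReal.ofReal (t ^ p) * ENNReal.ofReal (r ^ (-lam)) *
      wInt n u {y ∈ ball x r | t < |f y|}) ^ (1 / p)

/-- The Hardy–Littlewood maximal function `Mf(x) = sup_{B ∋ x} |B|⁻¹ ∫_B |f|`. -/
def maximal (n : ℕ) (f : Euc n → ℝ) (x : Euc n) : ℝ≥0∞ :=
  ⨆ (z : Euc n) (r : ℝ) (_ : 0 < r) (_ : x ∈ ball z r),
    (volume (ball z r))⁻¹ * ∫⁻ y in ball z r, ENNReal.ofReal |f y|

/-- Morrey norm for an `ℝ≥0∞`-valued function (e.g. a maximal function). -/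
def morreyNormE (n : ℕ) (p lam : ℝ) (u : Euc n → ℝ) (g : Euc n → ℝ≥0∞) : ℝ≥0∞ :=
  ⨆ (x : Euc n) (r : ℝ) (_ : 0 < r),
    (ENNReal.ofReal (r ^ (-lam)) *
      ∫⁻ y in ball x r, (g y) ^ p * ENNReal.ofReal (u y)) ^ (1 / p)

/-- Weak Morrey norm for an `ℝ≥0∞`-valued function (e.g. a maximal function). -/
def weakMorreyNormE (n : ℕ) (p lam : ℝ) (u : Euc n → ℝ) (g : Euc n → ℝ≥0∞) : ℝ≥0∞ :=
  ⨆ (x : Euc n) (r : ℝ) (_ : 0 < r) (t : ℝ) (_ : 0 < t),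
    (ENNReal.ofReal (t ^ p) * ENNReal.ofReal (r ^ (-lam)) *
      wInt n u {y ∈ ball x r | ENNReal.ofReal t < g y}) ^ (1 / p)

end


section Helpers

open MeasureTheory

/-- Hölder: for `0 < θ ≤ 1`, `∫ g^θ ≤ (∫ g)^θ (ν univ)^(1-θ)`. -/
lemma aux_holder {α : Type*} [MeasurableSpace α] (ν : Measure α)
    {g : α → ℝ≥0∞} (hg : AEMeasurable g ν) {θ : ℝ} (h0 : 0 < θ) (h1 : θ ≤ 1) :
    ∫⁻ a, g a ^ θ ∂ν ≤ (∫⁻ a, g a ∂ν) ^ θ * (ν Set.univ) ^ (1 - θ) := by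
  rcases eq_or_lt_of_le h1 with h | h
  · simp [h]
  · have hpq : (1/θ).HolderConjugate (1/(1-θ)) := by
      rw [Real.holderConjugate_iff]; constructor
      · rw [lt_div_iff₀ h0]; linarith
      · simp only [one_div, inv_inv]; ring
    have := ENNReal.lintegral_mul_le_Lp_mul_Lq ν hpq
      (f := fun a => g a ^ θ) (g := fun _ => (1:ℝ≥0∞))
      (hg.pow_const θ) aemeasurable_const
    simp only [Pi.mul_apply, mul_one, ENNReal.one_rpow, lintegral_const,
      one_div_one_div, one_mul] at this
    refine this.trans (le_of_eq ?_)
    congr 1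
    refine congrArg (· ^ θ) (lintegral_congr fun a => ?_)
    rw [← ENNReal.rpow_mul, mul_one_div_cancel h0.ne', ENNReal.rpow_one]

/-- The pointwise inequality `min(a^e, t)^p * a ≤ min(a^e, t)^θ` for `e(p-θ) = -1`. -/
lemma aux_pt {e θ p : ℝ} (he : e < 0) (hθ : 0 < θ) (hp : 0 < p)
    (key : e * (p - θ) = -1) {a t : ℝ} (ha : 0 ≤ a) (ht : 0 ≤ t) :
    min (a ^ e) t ^ p * a ≤ min (a ^ e) t ^ θ := by
  rcases eq_or_lt_of_le ha with h0 | ha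
  · rw [← h0, Real.zero_rpow he.ne, min_eq_left ht, Real.zero_rpow hp.ne',
      zero_mul]
    exact Real.rpow_nonneg le_rfl θ
  rcases le_total (a ^ e) t with h | h
  · rw [min_eq_left h]
    rw [← Real.rpow_mul ha.le, ← Real.rpow_mul ha.le]
    refine le_of_eq ?_
    calc a ^ (e * p) * a = a ^ (e * p) * a ^ (1:ℝ) := by rw [Real.rpow_one]
      _ = a ^ (e * p + 1) := by rw [← Real.rpow_add ha]
      _ = a ^ (e * θ) := by congr 1; linear_combination key
  · rw [min_eq_right h]
    rcases eq_or_lt_of_le ht with h0 | ht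
    · rw [← h0, Real.zero_rpow hp.ne', zero_mul]
      exact Real.rpow_nonneg le_rfl θ
    have hae : (0:ℝ) < a ^ e := Real.rpow_pos_of_pos ha e
    have hinv : a ≤ t ^ (1/e) := by
      have h2 : (a ^ e) ^ (1/e) ≤ t ^ (1/e) :=
        Real.rpow_le_rpow_of_nonpos ht h (one_div_neg.mpr he).le
      rwa [← Real.rpow_mul ha.le, mul_one_div_cancel he.ne, Real.rpow_one] at h2
    calc t ^ p * a ≤ t ^ p * t ^ (1/e) := by
          apply mul_le_mul_of_nonneg_left hinv (by positivity)
      _ = t ^ (p + 1/e) := by rw [← Real.rpow_add ht]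
      _ = t ^ θ := by
          congr 1
          have h1e : 1/e = θ - p := by
            rw [div_eq_iff he.ne]
            linear_combination key
          linarith

end Helpers

/-- if the Hardy–Littlewood maximal operator is bounded from `L^{p,λ}(w)` to
`WL^{p,λ}(w)`, then `w ∈ A_{p + λ/n}`. -/

theorem statement14 (n : ℕ) (hn : 1 ≤ n) (p lam : ℝ) (hp : 1 ≤ p)
    (hlam0 : 0 ≤ lam) (hlam : lam < (n : ℝ))
    (w : Euc n → ℝ) (hw : IsWeight n w)
    (C : ℝ≥0∞) (hC : C < ⊤)
    (hbd : ∀ f : Euc n → ℝ, Measurable f → morreyNorm n p lam w f < ⊤ →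
      weakMorreyNormE n p lam w (maximal n f) ≤ C * morreyNorm n p lam w f) :
    MemAp n (p + lam / n) w := by
  classical
  have hn0 : (0:ℝ) < (n:ℝ) := by exact_mod_cast Nat.pos_of_ne_zero (by omega)
  haveI : Nonempty (Fin n) := ⟨⟨0, hn⟩⟩
  have hp0 : (0:ℝ) < p := lt_of_lt_of_le one_pos hp
  have hsm := hw.2.aestronglyMeasurable
  set w₀ : Euc n → ℝ := fun y => max (hsm.mk w y) 0 with hw₀def
  have hw₀m : Measurable w₀ := hsm.stronglyMeasurable_mk.measurable.max measurable_const
  have hw₀nn : ∀ y, 0 ≤ w₀ y := fun y => le_max_right _ _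
  have hww₀ : w =ᵐ[(volume : Measure (Euc n))] w₀ := by
    filter_upwards [hsm.ae_eq_mk] with y hy
    rw [hw₀def]
    simpa using by rw [← hy, max_eq_left (hw.1 y)]
  have hwB_lt : ∀ (x : Euc n) (r : ℝ), wInt n w (ball x r) < ⊤ := by
    intro x r
    have h1 : IntegrableOn w (ball x r) volume :=
      (hw.2.integrableOn_isCompact (isCompact_closedBall x r)).mono_set
        ball_subset_closedBall
    exact h1.lintegral_lt_top
  have hweak : ∀ (g : Euc n → ℝ≥0∞) (x : Euc n) (r : ℝ), 0 < r → ∀ (t : ℝ), 0 < t →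
      (ENNReal.ofReal (t ^ p) * ENNReal.ofReal (r ^ (-lam)) *
        wInt n w {y ∈ ball x r | ENNReal.ofReal t < g y}) ^ (1 / p) ≤
      weakMorreyNormE n p lam w g := by
    intro g x r hr t ht
    apply le_iSup_of_le x; apply le_iSup_of_le r; apply le_iSup_of_le hr
    apply le_iSup_of_le t; exact le_iSup_of_le ht le_rfl
  have hmax : ∀ (f : Euc n → ℝ) (z : Euc n) (r : ℝ), 0 < r → ∀ y ∈ ball z r,
      (volume (ball z r))⁻¹ * ∫⁻ u in ball z r, ENNReal.ofReal |f u| ≤ maximal n f y := by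
    intro f z r hr y hy
    apply le_iSup_of_le z; apply le_iSup_of_le r; apply le_iSup_of_le hr
    exact le_iSup_of_le hy le_rfl
  have hXY : ∀ {X Y : ℝ≥0∞}, X ^ (1/p) ≤ Y → X ≤ Y ^ p := by
    intro X Y h
    have h2 := ENNReal.rpow_le_rpow h hp0.le
    rwa [← ENNReal.rpow_mul, one_div_mul_cancel hp0.ne', ENNReal.rpow_one] at h2
  by_cases hq : p + lam / n = 1
  · -- the A₁ case : p = 1, lam = 0
    have hlamn : lam / (n:ℝ) = 0 := by nlinarith [div_nonneg hlam0 hn0.le]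
    have hlam' : lam = 0 := by
      rcases div_eq_zero_iff.mp hlamn with h | h
      · exact h
      · exact absurd h hn0.ne'
    have hp1 : p = 1 := by rw [hlamn] at hq; linarith
    subst hp1; subst hlam'
    have e1 : (1:ℝ) + 0 / (n:ℝ) = 1 := by norm_num
    unfold MemAp muckConst
    rw [if_pos e1]
    have hDtop : (2 * C + 1 : ℝ≥0∞) ≠ ⊤ := by
      refine ENNReal.add_ne_top.mpr ⟨ENNReal.mul_ne_top (by norm_num) hC.ne, ENNReal.one_ne_top⟩
    refine lt_of_le_of_lt (sInf_le ?_) (lt_top_iff_ne_top.mpr hDtop)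
    simp only [Set.mem_setOf_eq]
    intro x r hr
    set B := ball x r with hB
    have h0B : volume B ≠ 0 := (measure_ball_pos volume x hr).ne'
    have hBtop : volume B ≠ ⊤ := measure_ball_lt_top.ne
    set wB := wInt n w B with hwBdef
    have hwBtop : wB ≠ ⊤ := (hwB_lt x r).ne
    rcases eq_or_ne wB 0 with h0w | h0w
    · refine Filter.Eventually.of_forall fun y => ?_
      rw [h0w, ENNReal.zero_div]
      exact zero_le
    have hkey : ∀ E : Set (Euc n), MeasurableSet E → E ⊆ B →
        volume E * wB ≤ 2 * C * volume B * wInt n w E := by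
      intro E hE hEB
      rcases eq_or_ne (volume E) 0 with hE0 | hE0
      · rw [hE0, zero_mul]; exact zero_le
      set f : Euc n → ℝ := E.indicator (fun _ => (1:ℝ)) with hf
      have hfm : Measurable f := measurable_const.indicator hE
      have hptw : ∀ y, ENNReal.ofReal (|f y| ^ (1:ℝ) * w y) =
          E.indicator (fun y => ENNReal.ofReal (w y)) y := by
        intro y
        by_cases hy : y ∈ E
        · simp [hf, Set.indicator_of_mem hy]
        · simp [hf, Set.indicator_of_notMem hy, Real.zero_rpow one_ne_zero]
      have hEint : ∀ s : Set (Euc n),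
          (∫⁻ y in s, ENNReal.ofReal (|f y| ^ (1:ℝ) * w y)) ≤ wInt n w E := by
        intro s
        calc (∫⁻ y in s, ENNReal.ofReal (|f y| ^ (1:ℝ) * w y))
            = ∫⁻ y in s, E.indicator (fun y => ENNReal.ofReal (w y)) y :=
              lintegral_congr fun y => hptw y
          _ = ∫⁻ y in E, ENNReal.ofReal (w y) ∂(volume.restrict s) := by
              rw [lintegral_indicator hE]
          _ = ∫⁻ y in E ∩ s, ENNReal.ofReal (w y) := by
              rw [Measure.restrict_restrict hE]
          _ ≤ wInt n w E := lintegral_mono_set Set.inter_subset_left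
      have hmor : morreyNorm n 1 0 w f ≤ wInt n w E := by
        unfold morreyNorm
        refine iSup_le fun z => iSup_le fun r' => iSup_le fun hr' => ?_
        simpa [neg_zero, Real.rpow_zero] using hEint (ball z r')
      have hmfin : morreyNorm n 1 0 w f < ⊤ :=
        lt_of_le_of_lt hmor (lt_of_le_of_lt (lintegral_mono_set hEB) (hwB_lt x r))
      have hWk := hbd f hfm hmfin
      set A := (volume B)⁻¹ * volume E with hA
      have hA0 : A ≠ 0 := mul_ne_zero (ENNReal.inv_ne_zero.mpr hBtop) hE0
      have hAtop : A ≠ ⊤ := ENNReal.mul_ne_top (ENNReal.inv_ne_top.mpr h0B)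
        (ne_top_of_le_ne_top hBtop (measure_mono hEB))
      have htA : 0 < A.toReal := ENNReal.toReal_pos hA0 hAtop
      set t := A.toReal / 2 with htdef
      have ht : 0 < t := by positivity
      have hoft : ENNReal.ofReal t < A := by
        rw [← ENNReal.ofReal_toReal hAtop]
        exact (ENNReal.ofReal_lt_ofReal_iff htA).mpr (by rw [htdef]; linarith)
      have hA2t : A ≤ 2 * ENNReal.ofReal t := by
        rw [← ENNReal.ofReal_toReal hAtop]
        calc ENNReal.ofReal A.toReal = ENNReal.ofReal (2 * t) := by
              rw [htdef]; ring_nf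
          _ = ENNReal.ofReal 2 * ENNReal.ofReal t := ENNReal.ofReal_mul (by norm_num)
          _ ≤ 2 * ENNReal.ofReal t := by norm_num
      have hfB : (∫⁻ u in B, ENNReal.ofReal |f u|) = volume E := by
        have hind : ∀ y, ENNReal.ofReal |f y| = E.indicator (fun _ => (1:ℝ≥0∞)) y := by
          intro y; by_cases hy : y ∈ E
          · simp [hf, Set.indicator_of_mem hy]
          · simp [hf, Set.indicator_of_notMem hy]
        rw [lintegral_congr hind, lintegral_indicator hE, Measure.restrict_restrict hE,
          setLIntegral_one, Set.inter_eq_self_of_subset_left hEB]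
      have hsub : B ⊆ {y ∈ B | ENNReal.ofReal t < maximal n f y} := by
        intro y hy
        refine ⟨hy, lt_of_lt_of_le hoft ?_⟩
        have h5 := hmax f x r hr y hy
        rw [← hB] at h5
        rw [hA, ← hfB]
        exact h5
      have hterm := (hweak (maximal n f) x r hr t ht).trans hWk
      rw [← hB] at hterm
      simp only [Real.rpow_one, neg_zero, Real.rpow_zero, ENNReal.ofReal_one,
        mul_one, one_mul, div_one, ENNReal.rpow_one] at hterm
      have hchain : ENNReal.ofReal t * wB ≤ C * wInt n w E := by
        refine le_trans ?_ (hterm.trans (mul_le_mul_right hmor C))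
        exact mul_le_mul_right (lintegral_mono_set hsub) _
      have h2 : A * wB ≤ 2 * (C * wInt n w E) := by
        calc A * wB ≤ (2 * ENNReal.ofReal t) * wB := mul_le_mul_left hA2t _
          _ = 2 * (ENNReal.ofReal t * wB) := by ring
          _ ≤ 2 * (C * wInt n w E) := mul_le_mul_right hchain _
      calc volume E * wB = volume B * A * wB := by
            rw [hA, ← mul_assoc, ENNReal.mul_inv_cancel h0B hBtop, one_mul]
        _ = volume B * (A * wB) := by ring
        _ ≤ volume B * (2 * (C * wInt n w E)) := mul_le_mul_right h2 _
        _ = 2 * C * volume B * wInt n w E := by ring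
    set Q := wB / volume B with hQdef
    set D : ℝ≥0∞ := 2 * C + 1 with hD
    have hD0 : D ≠ 0 := by
      simp [hD]
    have hQtop : Q ≠ ⊤ := (ENNReal.div_lt_top hwBtop h0B).ne
    set Bad := {y ∈ B | D * ENNReal.ofReal (w₀ y) < Q} with hBad
    have hBadm : MeasurableSet Bad := by
      have hBadeq : Bad = B ∩ {y | D * ENNReal.ofReal (w₀ y) < Q} := rfl
      rw [hBadeq]
      exact measurableSet_ball.inter
        (measurableSet_lt (hw₀m.ennreal_ofReal.const_mul D) measurable_const)
    have hBad0 : volume Bad = 0 := by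
      by_contra hne
      have h1 := hkey Bad hBadm (fun y hy => hy.1)
      have h2 : wInt n w Bad = ∫⁻ y in Bad, ENNReal.ofReal (w₀ y) :=
        lintegral_congr_ae (ae_restrict_of_ae (hww₀.fun_comp ENNReal.ofReal))
      have h3 : (∫⁻ y in Bad, ENNReal.ofReal (w₀ y)) ≤ Q / D * volume Bad := by
        calc (∫⁻ y in Bad, ENNReal.ofReal (w₀ y)) ≤ ∫⁻ _ in Bad, Q / D := by
              refine setLIntegral_mono measurable_const fun y hy => ?_
              refine (ENNReal.le_div_iff_mul_le (Or.inl hD0) (Or.inl hDtop)).mpr ?_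
              rw [mul_comm]
              exact hy.2.le
          _ = Q / D * volume Bad := setLIntegral_const _ _
      have h4 : volume Bad * wB ≤ (2*C/D) * (volume Bad * wB) := by
        calc volume Bad * wB ≤ 2 * C * volume B * wInt n w Bad := h1
          _ = 2 * C * volume B * ∫⁻ y in Bad, ENNReal.ofReal (w₀ y) := by rw [h2]
          _ ≤ 2 * C * volume B * (Q / D * volume Bad) := mul_le_mul_right h3 _
          _ = (2*C/D) * ((volume B * Q) * volume Bad) := by
              rw [div_eq_mul_inv, div_eq_mul_inv]; ring
          _ = (2*C/D) * (volume Bad * wB) := by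
              rw [hQdef, ENNReal.mul_div_cancel h0B hBtop]; ring
      have hx0 : volume Bad * wB ≠ 0 := mul_ne_zero hne h0w
      have hxtop : volume Bad * wB ≠ ⊤ :=
        ENNReal.mul_ne_top (ne_top_of_le_ne_top hBtop
          (measure_mono fun y hy => hy.1)) hwBtop
      have hdiv1 : (2*C/D : ℝ≥0∞) < 1 := by
        rw [ENNReal.div_lt_iff (Or.inl hD0) (Or.inl hDtop), one_mul, hD]
        exact ENNReal.lt_add_right (ENNReal.mul_ne_top (by norm_num) hC.ne) one_ne_zero
      have hlt : (2*C/D) * (volume Bad * wB) < volume Bad * wB := by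
        have h6 := ENNReal.mul_lt_mul_right hx0 hxtop hdiv1
        rwa [mul_one, mul_comm] at h6
      exact absurd (h4.trans_lt hlt) (lt_irrefl _)
    have hr0 : (volume.restrict B) Bad = 0 :=
      le_antisymm (le_trans (Measure.restrict_apply_le _ _) hBad0.le) (zero_le)
    have h2 : ∀ᵐ y ∂volume.restrict B, y ∉ Bad := by
      rw [ae_iff]
      simpa only [not_not, Set.setOf_mem_eq] using hr0
    filter_upwards [h2, ae_restrict_mem measurableSet_ball, ae_restrict_of_ae hww₀]
      with y hyBad hyB hyw
    rw [hyw]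
    have h7 : ¬ (D * ENNReal.ofReal (w₀ y) < Q) := fun hlt => hyBad ⟨hyB, hlt⟩
    exact not_lt.mp h7
  · -- the main case : q > 1
    have hq1 : 1 < p + lam / n :=
      lt_of_le_of_ne (by nlinarith [div_nonneg hlam0 hn0.le]) (Ne.symm hq)
    unfold MemAp muckConst
    rw [if_neg hq]
    unfold ApConst
    set qv := p + lam / (n:ℝ) with hqv
    set e : ℝ := 1 - qv / (qv - 1) with he_def
    set θ : ℝ := 1 - lam / (n:ℝ) with hθdef
    have hqv1 : (0:ℝ) < qv - 1 := by rw [hqv] at hq1 ⊢; linarith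
    have hθ0 : 0 < θ := by
      rw [hθdef]
      have h1 : lam / (n:ℝ) < 1 := (div_lt_one hn0).mpr hlam
      linarith
    have hθ1 : θ ≤ 1 := by
      rw [hθdef]
      have h1 := div_nonneg hlam0 hn0.le
      linarith
    have hln : lam / (n:ℝ) = 1 - θ := by rw [hθdef]; ring
    have he : e < 0 := by
      rw [he_def]
      have h1 : 1 < qv / (qv - 1) := by rw [lt_div_iff₀ hqv1]; linarith
      linarith
    have hee : e = -(1 / (qv - 1)) := by rw [he_def]; field_simp; ring
    have hkeyexp : e * (p - θ) = -1 := by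
      have hpθ : p - θ = qv - 1 := by rw [hθdef, hqv]; ring
      rw [hee, hpθ]
      field_simp
    have hpsplit : p = (qv - 1) + θ := by rw [hqv, hθdef]; ring
    set v := volume (ball (0 : Euc n) 1) with hv
    have hv0 : v ≠ 0 := (measure_ball_pos volume _ one_pos).ne'
    have hvtop : v ≠ ⊤ := measure_ball_lt_top.ne
    have hballvol : ∀ (z : Euc n) (s : ℝ), 0 < s →
        volume (ball z s) = ENNReal.ofReal (s ^ n) * v := by
      intro z s hs
      rw [hv, Measure.addHaar_ball_of_pos volume z hs, finrank_euclideanSpace_fin]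
    set G := (2:ℝ≥0∞) ^ p * C ^ p * v ^ (lam / (n:ℝ)) with hG
    have hvl0 : v ^ (lam / (n:ℝ)) ≠ 0 :=
      (ENNReal.rpow_pos (zero_lt_iff.mpr hv0) hvtop).ne'
    have hvltop : v ^ (lam / (n:ℝ)) ≠ ⊤ :=
      ENNReal.rpow_ne_top_of_nonneg (div_nonneg hlam0 hn0.le) hvtop
    have hGtop : G ≠ ⊤ := by
      rw [hG]
      exact ENNReal.mul_ne_top (ENNReal.mul_ne_top
        (ENNReal.rpow_ne_top_of_nonneg hp0.le (by norm_num))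
        (ENNReal.rpow_ne_top_of_nonneg hp0.le hC.ne)) hvltop
    refine lt_of_le_of_lt (iSup_le fun x => iSup_le fun r => iSup_le fun hr => ?_)
      (lt_top_iff_ne_top.mpr (ENNReal.mul_ne_top hGtop (ENNReal.inv_ne_top.mpr hvl0)))
    set B := ball x r with hB
    have h0B : volume B ≠ 0 := (measure_ball_pos volume x hr).ne'
    have hBtop : volume B ≠ ⊤ := measure_ball_lt_top.ne
    set wB := wInt n w B with hwBdef
    have hwBtop : wB ≠ ⊤ := (hwB_lt x r).ne
    set σ₀ : Euc n → ℝ := fun y => w₀ y ^ e with hσ₀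
    have hσ₀m : Measurable σ₀ := hw₀m.pow measurable_const
    have hσ₀nn : ∀ y, 0 ≤ σ₀ y := fun y => Real.rpow_nonneg (hw₀nn y) e
    have hSig : wInt n (fun y => w y ^ e) B = ∫⁻ y in B, ENNReal.ofReal (σ₀ y) := by
      refine lintegral_congr_ae (ae_restrict_of_ae (hww₀.mono fun y hy => ?_))
      show ENNReal.ofReal (w y ^ e) = ENNReal.ofReal (w₀ y ^ e)
      rw [hy]
    set S : ℕ → ℝ≥0∞ := fun k => ∫⁻ y in B, ENNReal.ofReal (min (σ₀ y) (k:ℝ)) with hS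
    set Sσ := ∫⁻ y in B, ENNReal.ofReal (σ₀ y) with hSσ
    have hSfin : ∀ k : ℕ, S k ≠ ⊤ := by
      intro k
      have hb : (ENNReal.ofReal (k:ℝ) * volume B) ≠ ⊤ :=
        ENNReal.mul_ne_top ENNReal.ofReal_ne_top hBtop
      refine ne_top_of_le_ne_top hb ?_
      calc S k ≤ ∫⁻ _ in B, ENNReal.ofReal (k:ℝ) :=
          setLIntegral_mono measurable_const fun y _ =>
            ENNReal.ofReal_le_ofReal (min_le_right _ _)
        _ = ENNReal.ofReal (k:ℝ) * volume B := setLIntegral_const _ _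
    have hSsup : Sσ = ⨆ k, S k := by
      have hptsup : ∀ y, ENNReal.ofReal (σ₀ y) =
          ⨆ k : ℕ, ENNReal.ofReal (min (σ₀ y) (k:ℝ)) := by
        intro y
        refine le_antisymm ?_ (iSup_le fun k => ENNReal.ofReal_le_ofReal (min_le_left _ _))
        obtain ⟨k, hk⟩ := exists_nat_ge (σ₀ y)
        exact le_iSup_of_le k (le_of_eq (by rw [min_eq_left hk]))
      have hmeask : ∀ k : ℕ, Measurable fun y => ENNReal.ofReal (min (σ₀ y) (k:ℝ)) :=
        fun k => (hσ₀m.min measurable_const).ennreal_ofReal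
      have hmono : Monotone fun (k:ℕ) (y : Euc n) => ENNReal.ofReal (min (σ₀ y) (k:ℝ)) := by
        intro k l hkl y
        exact ENNReal.ofReal_le_ofReal (min_le_min le_rfl (by exact_mod_cast hkl))
      calc Sσ = ∫⁻ y in B, ⨆ k : ℕ, ENNReal.ofReal (min (σ₀ y) (k:ℝ)) :=
            lintegral_congr fun y => hptsup y
        _ = ⨆ k, S k := lintegral_iSup hmeask hmono
    rcases eq_or_ne wB 0 with h0w | h0w
    · rw [h0w, ENNReal.zero_div, zero_mul]; exact zero_le
    rw [hSig]
    rcases eq_or_ne Sσ 0 with h0S | h0S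
    · rw [h0S, ENNReal.zero_div, ENNReal.zero_rpow_of_pos hqv1, mul_zero]
      exact zero_le
    set X := ((volume B)⁻¹) ^ p * ENNReal.ofReal (r ^ (-lam)) * wB with hX
    have hX0 : X ≠ 0 := by
      rw [hX]
      refine mul_ne_zero (mul_ne_zero ?_ ?_) h0w
      · exact (ENNReal.rpow_pos (ENNReal.inv_pos.mpr hBtop)
          (ENNReal.inv_ne_top.mpr h0B)).ne'
      · exact (ENNReal.ofReal_pos.mpr (Real.rpow_pos_of_pos hr _)).ne'
    have hXtop : X ≠ ⊤ := by
      rw [hX]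
      exact ENNReal.mul_ne_top (ENNReal.mul_ne_top
        (ENNReal.rpow_ne_top_of_nonneg hp0.le (ENNReal.inv_ne_top.mpr h0B))
        ENNReal.ofReal_ne_top) hwBtop
    have hper : ∀ k : ℕ, S k ^ (qv - 1) * X ≤ G := by
      intro k
      rcases eq_or_ne (S k) 0 with hSk0 | hSk0
      · rw [hSk0, ENNReal.zero_rpow_of_pos hqv1, zero_mul]; exact zero_le
      set τ : Euc n → ℝ := fun y => min (σ₀ y) (k:ℝ) with hτ
      have hτm : Measurable τ := hσ₀m.min measurable_const
      have hτnn : ∀ y, 0 ≤ τ y := fun y => le_min (hσ₀nn y) (Nat.cast_nonneg k)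
      set fk : Euc n → ℝ := B.indicator τ with hfk
      have hfkm : Measurable fk := hτm.indicator measurableSet_ball
      have hpt : ∀ y, ENNReal.ofReal (|fk y| ^ p * w₀ y) ≤
          B.indicator (fun y => ENNReal.ofReal (τ y) ^ θ) y := by
        intro y
        by_cases hy : y ∈ B
        · simp only [hfk, Set.indicator_of_mem hy]
          rw [abs_of_nonneg (hτnn y)]
          refine le_trans (ENNReal.ofReal_le_ofReal
            (aux_pt he hθ0 hp0 hkeyexp (hw₀nn y) (Nat.cast_nonneg k))) ?_
          rw [← ENNReal.ofReal_rpow_of_nonneg (hτnn y) hθ0.le]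
        · simp only [hfk, Set.indicator_of_notMem hy]
          rw [abs_zero, Real.zero_rpow hp0.ne', zero_mul, ENNReal.ofReal_zero]
      have hmor : morreyNorm n p lam w fk ≤ (v ^ (lam/(n:ℝ)) * S k ^ θ) ^ (1/p) := by
        unfold morreyNorm
        refine iSup_le fun z => iSup_le fun r' => iSup_le fun hr' => ?_
        refine ENNReal.rpow_le_rpow ?_ (one_div_nonneg.mpr hp0.le)
        have hcongr : (∫⁻ y in ball z r', ENNReal.ofReal (|fk y| ^ p * w y)) =
            ∫⁻ y in ball z r', ENNReal.ofReal (|fk y| ^ p * w₀ y) := by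
          refine lintegral_congr_ae (ae_restrict_of_ae (hww₀.mono fun y hy => ?_))
          show ENNReal.ofReal (|fk y| ^ p * w y) = ENNReal.ofReal (|fk y| ^ p * w₀ y)
          rw [hy]
        have hint1 : (∫⁻ y in ball z r', ENNReal.ofReal (|fk y| ^ p * w₀ y)) ≤
            ∫⁻ y in B ∩ ball z r', ENNReal.ofReal (τ y) ^ θ := by
          calc (∫⁻ y in ball z r', ENNReal.ofReal (|fk y| ^ p * w₀ y))
              ≤ ∫⁻ y in ball z r', B.indicator (fun y => ENNReal.ofReal (τ y) ^ θ) y :=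
                lintegral_mono fun y => hpt y
            _ = ∫⁻ y in B, ENNReal.ofReal (τ y) ^ θ ∂(volume.restrict (ball z r')) := by
                rw [lintegral_indicator measurableSet_ball]
            _ = ∫⁻ y in B ∩ ball z r', ENNReal.ofReal (τ y) ^ θ := by
                rw [Measure.restrict_restrict measurableSet_ball]
        have hhold : (∫⁻ y in B ∩ ball z r', ENNReal.ofReal (τ y) ^ θ) ≤
            S k ^ θ * (volume (B ∩ ball z r')) ^ (1 - θ) := by
          have h8 := aux_holder (volume.restrict (B ∩ ball z r'))
            (g := fun y => ENNReal.ofReal (τ y)) hτm.ennreal_ofReal.aemeasurable hθ0 hθ1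
          rw [Measure.restrict_apply_univ] at h8
          refine h8.trans ?_
          refine mul_le_mul_left (ENNReal.rpow_le_rpow ?_ hθ0.le) _
          exact lintegral_mono_set Set.inter_subset_left
        have hvol : ENNReal.ofReal (r' ^ (-lam)) * (volume (B ∩ ball z r')) ^ (1 - θ) ≤
            v ^ (lam/(n:ℝ)) := by
          have h9 : volume (B ∩ ball z r') ≤ ENNReal.ofReal (r' ^ n) * v := by
            rw [← hballvol z r' hr']
            exact measure_mono Set.inter_subset_right
          have h10 : (volume (B ∩ ball z r')) ^ (1 - θ) ≤
              ENNReal.ofReal (r' ^ lam) * v ^ (lam/(n:ℝ)) := by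
            calc (volume (B ∩ ball z r')) ^ (1 - θ)
                ≤ (ENNReal.ofReal (r' ^ n) * v) ^ (1 - θ) :=
                  ENNReal.rpow_le_rpow h9 (by linarith)
              _ = ENNReal.ofReal (r' ^ n) ^ (1 - θ) * v ^ (1 - θ) :=
                  ENNReal.mul_rpow_of_nonneg _ _ (by linarith)
              _ = ENNReal.ofReal (r' ^ lam) * v ^ (lam/(n:ℝ)) := by
                  rw [← hln]
                  congr 1
                  rw [ENNReal.ofReal_rpow_of_nonneg (pow_nonneg hr'.le n)
                    (div_nonneg hlam0 hn0.le)]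
                  congr 1
                  rw [← Real.rpow_natCast r' n, ← Real.rpow_mul hr'.le]
                  congr 1
                  field_simp
          calc ENNReal.ofReal (r' ^ (-lam)) * (volume (B ∩ ball z r')) ^ (1 - θ)
              ≤ ENNReal.ofReal (r' ^ (-lam)) *
                  (ENNReal.ofReal (r' ^ lam) * v ^ (lam/(n:ℝ))) :=
                mul_le_mul_right h10 _
            _ = ENNReal.ofReal (r' ^ (-lam) * r' ^ lam) * v ^ (lam/(n:ℝ)) := by
                rw [ENNReal.ofReal_mul (by positivity)]; ring
            _ = v ^ (lam/(n:ℝ)) := by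
                rw [← Real.rpow_add hr', neg_add_cancel, Real.rpow_zero,
                  ENNReal.ofReal_one, one_mul]
        calc ENNReal.ofReal (r' ^ (-lam)) *
              ∫⁻ y in ball z r', ENNReal.ofReal (|fk y| ^ p * w y)
            ≤ ENNReal.ofReal (r' ^ (-lam)) *
                (S k ^ θ * (volume (B ∩ ball z r')) ^ (1 - θ)) := by
              rw [hcongr]
              exact mul_le_mul_right (hint1.trans hhold) _
          _ = S k ^ θ * (ENNReal.ofReal (r' ^ (-lam)) *
                (volume (B ∩ ball z r')) ^ (1 - θ)) := by ring
          _ ≤ S k ^ θ * v ^ (lam/(n:ℝ)) := mul_le_mul_right hvol _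
          _ = v ^ (lam/(n:ℝ)) * S k ^ θ := mul_comm _ _
      have hmfin : morreyNorm n p lam w fk < ⊤ := by
        refine lt_of_le_of_lt hmor ?_
        refine ENNReal.rpow_lt_top_of_nonneg (one_div_nonneg.mpr hp0.le) ?_
        exact ENNReal.mul_ne_top hvltop (ENNReal.rpow_ne_top_of_nonneg hθ0.le (hSfin k))
      have hWk := hbd fk hfkm hmfin
      set A := (volume B)⁻¹ * S k with hA
      have hfkint : (∫⁻ u in B, ENNReal.ofReal |fk u|) = S k :=
        setLIntegral_congr_fun measurableSet_ball (fun y hy => by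
          rw [hfk, Set.indicator_of_mem hy, abs_of_nonneg (hτnn y)])
      have hA0 : A ≠ 0 := mul_ne_zero (ENNReal.inv_ne_zero.mpr hBtop) hSk0
      have hAtop : A ≠ ⊤ := ENNReal.mul_ne_top (ENNReal.inv_ne_top.mpr h0B) (hSfin k)
      have htA : 0 < A.toReal := ENNReal.toReal_pos hA0 hAtop
      set t := A.toReal / 2 with htdef
      have ht : 0 < t := by positivity
      have hoft : ENNReal.ofReal t < A := by
        rw [← ENNReal.ofReal_toReal hAtop]
        exact (ENNReal.ofReal_lt_ofReal_iff htA).mpr (by rw [htdef]; linarith)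
      have hA2t : A ≤ 2 * ENNReal.ofReal t := by
        rw [← ENNReal.ofReal_toReal hAtop]
        calc ENNReal.ofReal A.toReal = ENNReal.ofReal (2 * t) := by rw [htdef]; ring_nf
          _ = ENNReal.ofReal 2 * ENNReal.ofReal t := ENNReal.ofReal_mul (by norm_num)
          _ ≤ 2 * ENNReal.ofReal t := by norm_num
      have hsub : B ⊆ {y ∈ B | ENNReal.ofReal t < maximal n fk y} := by
        intro y hy
        refine ⟨hy, lt_of_lt_of_le hoft ?_⟩
        have h5 := hmax fk x r hr y hy
        rw [← hB, hfkint] at h5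
        rw [hA]
        exact h5
      have hterm := (hweak (maximal n fk) x r hr t ht).trans hWk
      rw [← hB] at hterm
      have hup := hXY hterm
      have hrhs : (C * morreyNorm n p lam w fk) ^ p ≤
          C ^ p * (v ^ (lam/(n:ℝ)) * S k ^ θ) := by
        rw [ENNReal.mul_rpow_of_nonneg _ _ hp0.le]
        refine mul_le_mul_right ?_ _
        refine le_trans (ENNReal.rpow_le_rpow hmor hp0.le) ?_
        rw [← ENNReal.rpow_mul, one_div_mul_cancel hp0.ne', ENNReal.rpow_one]
      have hlhs : ENNReal.ofReal (t ^ p) * ENNReal.ofReal (r ^ (-lam)) * wB ≤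
          ENNReal.ofReal (t ^ p) * ENNReal.ofReal (r ^ (-lam)) *
            wInt n w {y ∈ B | ENNReal.ofReal t < maximal n fk y} :=
        mul_le_mul_right (lintegral_mono_set hsub) _
      have hmain : A ^ p * ENNReal.ofReal (r ^ (-lam)) * wB ≤ G * S k ^ θ := by
        have hA2tp : A ^ p ≤ (2:ℝ≥0∞) ^ p * ENNReal.ofReal (t ^ p) := by
          calc A ^ p ≤ (2 * ENNReal.ofReal t) ^ p := ENNReal.rpow_le_rpow hA2t hp0.le
            _ = (2:ℝ≥0∞) ^ p * (ENNReal.ofReal t) ^ p :=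
                ENNReal.mul_rpow_of_nonneg _ _ hp0.le
            _ = (2:ℝ≥0∞) ^ p * ENNReal.ofReal (t ^ p) := by
                rw [ENNReal.ofReal_rpow_of_nonneg ht.le hp0.le]
        calc A ^ p * ENNReal.ofReal (r ^ (-lam)) * wB
            ≤ ((2:ℝ≥0∞) ^ p * ENNReal.ofReal (t ^ p)) * ENNReal.ofReal (r ^ (-lam)) * wB :=
              mul_le_mul_left (mul_le_mul_left hA2tp _) _
          _ = (2:ℝ≥0∞) ^ p * (ENNReal.ofReal (t ^ p) * ENNReal.ofReal (r ^ (-lam)) * wB) := by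
              ring
          _ ≤ (2:ℝ≥0∞) ^ p * (C ^ p * (v ^ (lam/(n:ℝ)) * S k ^ θ)) :=
              mul_le_mul_right ((hlhs.trans hup).trans hrhs) _
          _ = G * S k ^ θ := by rw [hG]; ring
      have hAp : A ^ p = ((volume B)⁻¹) ^ p * S k ^ p := by
        rw [hA, ENNReal.mul_rpow_of_nonneg _ _ hp0.le]
      have hSp : S k ^ p = S k ^ (qv - 1) * S k ^ θ := by
        rw [← ENNReal.rpow_add _ _ hSk0 (hSfin k), ← hpsplit]
      have hfin2 : (S k ^ (qv - 1) * X) * S k ^ θ ≤ G * S k ^ θ := by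
        calc (S k ^ (qv - 1) * X) * S k ^ θ
            = A ^ p * ENNReal.ofReal (r ^ (-lam)) * wB := by
              rw [hAp, hSp, hX]; ring
          _ ≤ G * S k ^ θ := hmain
      have hθfin : S k ^ θ ≠ ⊤ := ENNReal.rpow_ne_top_of_nonneg hθ0.le (hSfin k)
      have hθ0' : S k ^ θ ≠ 0 :=
        (ENNReal.rpow_pos (zero_lt_iff.mpr hSk0) (hSfin k)).ne'
      exact (ENNReal.mul_le_mul_iff_left hθ0' hθfin).mp hfin2
    have hSσle : Sσ ^ (qv - 1) * X ≤ G := by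
      have hdle : ∀ k : ℕ, S k ≤ (G / X) ^ (1/(qv-1)) := by
        intro k
        have h1 : S k ^ (qv - 1) ≤ G / X :=
          (ENNReal.le_div_iff_mul_le (Or.inl hX0) (Or.inl hXtop)).mpr (hper k)
        have h2 := ENNReal.rpow_le_rpow h1 (one_div_pos.mpr hqv1).le
        rwa [← ENNReal.rpow_mul, mul_one_div_cancel hqv1.ne', ENNReal.rpow_one] at h2
      have h3 : Sσ ≤ (G / X) ^ (1/(qv-1)) := by
        rw [hSsup]; exact iSup_le hdle
      have h4 := ENNReal.rpow_le_rpow h3 hqv1.le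
      rw [← ENNReal.rpow_mul, one_div_mul_cancel hqv1.ne', ENNReal.rpow_one] at h4
      exact (ENNReal.le_div_iff_mul_le (Or.inl hX0) (Or.inl hXtop)).mp h4
    set a := (volume B)⁻¹ with ha
    have ha0 : a ≠ 0 := ENNReal.inv_ne_zero.mpr hBtop
    have hatop : a ≠ ⊤ := ENNReal.inv_ne_top.mpr h0B
    have hsplit : a ^ (qv - 1) * a = a ^ p *
        (ENNReal.ofReal (r ^ (-lam)) * (v ^ (lam/(n:ℝ)))⁻¹) := by
      have h1 : a ^ (qv - 1) * a = a ^ p * a ^ (lam/(n:ℝ)) := by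
        calc a ^ (qv-1) * a = a ^ (qv-1) * a ^ (1:ℝ) := by rw [ENNReal.rpow_one]
          _ = a ^ (qv - 1 + 1) := (ENNReal.rpow_add _ _ ha0 hatop).symm
          _ = a ^ (p + lam/(n:ℝ)) := by
              congr 1
              rw [hqv]; ring
          _ = a ^ p * a ^ (lam/(n:ℝ)) := ENNReal.rpow_add _ _ ha0 hatop
      have h2 : a ^ (lam/(n:ℝ)) = ENNReal.ofReal (r ^ (-lam)) * (v ^ (lam/(n:ℝ)))⁻¹ := by
        rw [ha, hB, hballvol x r hr,
          ENNReal.mul_inv (Or.inl (ENNReal.ofReal_pos.mpr (pow_pos hr n)).ne')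
            (Or.inl ENNReal.ofReal_ne_top),
          ENNReal.mul_rpow_of_nonneg _ _ (div_nonneg hlam0 hn0.le),
          ENNReal.inv_rpow, ENNReal.inv_rpow]
        congr 1
        rw [ENNReal.ofReal_rpow_of_nonneg (pow_nonneg hr.le n) (div_nonneg hlam0 hn0.le)]
        rw [← Real.rpow_natCast r n, ← Real.rpow_mul hr.le]
        have hnl : (n:ℝ) * (lam / (n:ℝ)) = lam := by field_simp
        rw [hnl, Real.rpow_neg hr.le, ENNReal.ofReal_inv_of_pos (Real.rpow_pos_of_pos hr lam)]
      rw [h1, h2]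
    calc wB / volume B * (Sσ / volume B) ^ (qv - 1)
        = wB * a * (Sσ ^ (qv-1) * a ^ (qv-1)) := by
          rw [div_eq_mul_inv, div_eq_mul_inv, ENNReal.mul_rpow_of_nonneg _ _ hqv1.le]
      _ = Sσ ^ (qv-1) * (a ^ (qv-1) * a) * wB := by ring
      _ = Sσ ^ (qv-1) * (a ^ p * (ENNReal.ofReal (r ^ (-lam)) *
            (v ^ (lam/(n:ℝ)))⁻¹)) * wB := by rw [hsplit]
      _ = (Sσ ^ (qv-1) * X) * (v ^ (lam/(n:ℝ)))⁻¹ := by rw [hX, ha]; ring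
      _ ≤ G * (v ^ (lam/(n:ℝ)))⁻¹ := mul_le_mul_left hSσle _
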